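/- For all a, b > 0 with a ≠ b, M(a,b) < (C(a,b)/6 + 5A(a,b)/6)^(8/25) · (C(a,b)^(1/6) A(a,b)^(5/6))^(17/25). -/

import Mathlib

noncomputable def NSmean (a b : ℝ) : ℝ := (a - b) / (2 * Real.arsinh ((a - b) / (a + b)))
noncomputable def Amean (a b : ℝ) : ℝ := (a + b) / 2
noncomputable def Cmean (a b : ℝ) : ℝ := (a ^ 2 + b ^ 2) / (a + b)

open Real Set

lemma loglb {x : ℝ} (hx : 0 ≤ x) : x*(6+3*x)/(6+6*x+x^2) ≤ Real.log (1+x) := by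
  set f : ℝ → ℝ := fun z => Real.log (1+z) - z*(6+3*z)/(6+6*z+z^2) with hf
  have key : ∀ y : ℝ, 0 ≤ y → HasDerivAt f
      ((1+y)⁻¹ - ((6+6*y)*(6+6*y+y^2) - (y*(6+3*y))*(6+2*y))/(6+6*y+y^2)^2) y := by
    intro y hy
    have h1 : (1:ℝ)+y ≠ 0 := by positivity
    have h2 : (6:ℝ)+6*y+y^2 ≠ 0 := by positivity
    have hlog : HasDerivAt (fun z : ℝ => Real.log (1+z)) ((1+y)⁻¹) y := by
      have := ((hasDerivAt_id y).const_add (1:ℝ)).log h1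
      simpa using this
    have hnum : HasDerivAt (fun z : ℝ => z*(6+3*z)) (6+6*y) y := by
      have := (hasDerivAt_id y).mul (((hasDerivAt_id y).const_mul (3:ℝ)).const_add (6:ℝ))
      exact this.congr_deriv (by simp only [id_eq]; ring)
    have hden : HasDerivAt (fun z : ℝ => 6+6*z+z^2) (6+2*y) y := by
      have h := (((hasDerivAt_id y).const_mul (6:ℝ)).const_add (6:ℝ)).add
        ((hasDerivAt_id y).pow 2)
      exact h.congr_deriv (by simp only [id_eq]; ring)
    have hrat := hnum.div hden h2
    have := hlog.sub hrat
    exact this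
  have hcont : ContinuousOn f (Ici 0) := by
    apply ContinuousOn.sub
    · apply ContinuousOn.log (by fun_prop)
      intro y hy
      have : (0:ℝ) ≤ y := hy
      positivity
    · apply ContinuousOn.div (by fun_prop) (by fun_prop)
      intro y hy
      have : (0:ℝ) ≤ y := hy
      positivity
  have hmono : MonotoneOn f (Ici 0) := by
    apply monotoneOn_of_deriv_nonneg (convex_Ici 0) hcont
    · intro y hy
      rw [interior_Ici] at hy
      exact (key y (le_of_lt hy)).differentiableAt.differentiableWithinAt
    · intro y hy
      rw [interior_Ici] at hy
      have hy0 : (0:ℝ) ≤ y := le_of_lt hy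
      rw [(key y hy0).deriv]
      have h1 : (0:ℝ) < 1+y := by positivity
      have h2 : (0:ℝ) < 6+6*y+y^2 := by positivity
      have e : (1+y)⁻¹ - ((6+6*y)*(6+6*y+y^2) - (y*(6+3*y))*(6+2*y))/(6+6*y+y^2)^2
          = y^4/((1+y)*(6+6*y+y^2)^2) := by
        field_simp
        ring
      rw [e]
      positivity
  have h0 : f 0 ≤ f x := hmono (by simp) (by exact hx) hx
  have : f 0 = 0 := by simp [hf]
  rw [this] at h0
  simp only [hf] at h0
  linarith

lemma logub {x : ℝ} (hx : 0 ≤ x) : Real.log (1+x) ≤ x*(6+x)/(6+4*x) := by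
  set f : ℝ → ℝ := fun z => z*(6+z)/(6+4*z) - Real.log (1+z) with hf
  have key : ∀ y : ℝ, 0 ≤ y → HasDerivAt f
      (((6+2*y)*(6+4*y) - (y*(6+y))*4)/(6+4*y)^2 - (1+y)⁻¹) y := by
    intro y hy
    have h1 : (1:ℝ)+y ≠ 0 := by positivity
    have h2 : (6:ℝ)+4*y ≠ 0 := by positivity
    have hlog : HasDerivAt (fun z : ℝ => Real.log (1+z)) ((1+y)⁻¹) y := by
      have := ((hasDerivAt_id y).const_add (1:ℝ)).log h1
      simpa using this
    have hnum : HasDerivAt (fun z : ℝ => z*(6+z)) (6+2*y) y := by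
      have := (hasDerivAt_id y).mul ((hasDerivAt_id y).const_add (6:ℝ))
      exact this.congr_deriv (by simp only [id_eq]; ring)
    have hden : HasDerivAt (fun z : ℝ => 6+4*z) (4:ℝ) y := by
      have := ((hasDerivAt_id y).const_mul (4:ℝ)).const_add (6:ℝ)
      exact this.congr_deriv (by norm_num)
    have hrat := hnum.div hden h2
    have h4 : (y*(6+y))*4 = y*(6+y)*4 := by ring
    exact (hrat.sub hlog)
  have hcont : ContinuousOn f (Ici 0) := by
    apply ContinuousOn.sub
    · apply ContinuousOn.div (by fun_prop) (by fun_prop)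
      intro y hy
      have : (0:ℝ) ≤ y := hy
      positivity
    · apply ContinuousOn.log (by fun_prop)
      intro y hy
      have : (0:ℝ) ≤ y := hy
      positivity
  have hmono : MonotoneOn f (Ici 0) := by
    apply monotoneOn_of_deriv_nonneg (convex_Ici 0) hcont
    · intro y hy
      rw [interior_Ici] at hy
      exact (key y (le_of_lt hy)).differentiableAt.differentiableWithinAt
    · intro y hy
      rw [interior_Ici] at hy
      have hy0 : (0:ℝ) ≤ y := le_of_lt hy
      rw [(key y hy0).deriv]
      have h1 : (0:ℝ) < 1+y := by positivity
      have h2 : (0:ℝ) < 6+4*y := by positivity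
      have e : ((6+2*y)*(6+4*y) - (y*(6+y))*4)/(6+4*y)^2 - (1+y)⁻¹
          = 4*y^3/((1+y)*(6+4*y)^2) := by
        field_simp
        ring
      rw [e]
      positivity
  have h0 : f 0 ≤ f x := hmono (by simp) (by exact hx) hx
  have : f 0 = 0 := by simp [hf]
  rw [this] at h0
  simp only [hf] at h0
  linarith


lemma asinh_lb {t : ℝ} (h0 : 0 ≤ t) (h1 : t ≤ 1) :
    (214552800*t + 205768080*t^3 + 32689230*t^5 - 939109*t^7) /
      (214552800 + 241526880*t^2 + 56852250*t^4) ≤ Real.arsinh t := by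
  set f : ℝ → ℝ := fun z => Real.arsinh z -
    (214552800*z + 205768080*z^3 + 32689230*z^5 - 939109*z^7) /
      (214552800 + 241526880*z^2 + 56852250*z^4) with hf
  have hDpos : ∀ y : ℝ, (0:ℝ) < 214552800 + 241526880*y^2 + 56852250*y^4 := by
    intro y; positivity
  have key : ∀ y : ℝ, HasDerivAt f
      ((Real.sqrt (1+y^2))⁻¹ -
        ((214552800 + 617304240*y^2 + 163446150*y^4 - 6573763*y^6) *
            (214552800 + 241526880*y^2 + 56852250*y^4) -
          (214552800*y + 205768080*y^3 + 32689230*y^5 - 939109*y^7) *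
            (483053760*y + 227409000*y^3)) /
          (214552800 + 241526880*y^2 + 56852250*y^4)^2) y := by
    intro y
    have hN : HasDerivAt (fun z : ℝ =>
        214552800*z + 205768080*z^3 + 32689230*z^5 - 939109*z^7)
        (214552800 + 617304240*y^2 + 163446150*y^4 - 6573763*y^6) y := by
      have h1' := (hasDerivAt_id' (𝕜 := ℝ) y).const_mul (214552800:ℝ)
      have h3 := (hasDerivAt_pow 3 y).const_mul (205768080:ℝ)
      have h5 := (hasDerivAt_pow 5 y).const_mul (32689230:ℝ)
      have h7 := (hasDerivAt_pow 7 y).const_mul (939109:ℝ)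
      have := ((h1'.add h3).add h5).sub h7
      exact this.congr_deriv (by push_cast; ring)
    have hD : HasDerivAt (fun z : ℝ => 214552800 + 241526880*z^2 + 56852250*z^4)
        (483053760*y + 227409000*y^3) y := by
      have h2 := ((hasDerivAt_pow 2 y).const_mul (241526880:ℝ)).const_add (214552800:ℝ)
      have h4 := (hasDerivAt_pow 4 y).const_mul (56852250:ℝ)
      have := h2.add h4
      exact this.congr_deriv (by push_cast; ring)
    exact (Real.hasDerivAt_arsinh y).sub (hN.div hD (ne_of_gt (hDpos y)))
  have hcont : ContinuousOn f (Icc 0 1) := by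
    apply ContinuousOn.sub Real.continuous_arsinh.continuousOn
    exact ContinuousOn.div (by fun_prop) (by fun_prop)
      (fun y _ => ne_of_gt (hDpos y))
  have hmono : MonotoneOn f (Icc 0 1) := by
    apply monotoneOn_of_deriv_nonneg (convex_Icc 0 1) hcont
    · intro y hy
      exact (key y).differentiableAt.differentiableWithinAt
    · intro y hy
      rw [interior_Icc] at hy
      obtain ⟨hy0, hy1⟩ := hy
      have hy0' : (0:ℝ) ≤ y := le_of_lt hy0
      have hy1' : y ≤ 1 := le_of_lt hy1
      rw [(key y).deriv]
      set E : ℝ := (214552800 + 617304240*y^2 + 163446150*y^4 - 6573763*y^6) *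
            (214552800 + 241526880*y^2 + 56852250*y^4) -
          (214552800*y + 205768080*y^3 + 32689230*y^5 - 939109*y^7) *
            (483053760*y + 227409000*y^3) with hE
      set D : ℝ := 214552800 + 241526880*y^2 + 56852250*y^4 with hD
      have hDp : (0:ℝ) < D := hDpos y
      have hsp : (0:ℝ) < Real.sqrt (1+y^2) := Real.sqrt_pos.2 (by positivity)
      have hmain : E * Real.sqrt (1+y^2) ≤ D^2 := by
        rcases le_or_gt E 0 with hE0 | hE0
        · calc E * Real.sqrt (1+y^2) ≤ 0 := mul_nonpos_of_nonpos_of_nonneg hE0 hsp.le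
            _ ≤ D^2 := by positivity
        · have hcert : (1+y^2) * E^2 ≤ (D^2)^2 := by
            have h10 : y^10 ≤ 1 := pow_le_one₀ hy0' hy1'
            have hkey : D^4 - (1+y^2)*E^2 =
                y^12*(12040388574017053580835120000000 + 21798995615758125749931408000000*y^2
                  + 13419162612143558568936666000000*y^4 + 3095675457717046852186136640000*y^6
                  + 206387309676614192952021787500*y^8 - 25654870630179618802628062500*y^10) := by
              rw [hE, hD]; ring
            have hinner : (0:ℝ) ≤ 12040388574017053580835120000000 + 21798995615758125749931408000000*y^2
                  + 13419162612143558568936666000000*y^4 + 3095675457717046852186136640000*y^6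
                  + 206387309676614192952021787500*y^8 - 25654870630179618802628062500*y^10 := by
              nlinarith [pow_nonneg hy0' 2, pow_nonneg hy0' 4, pow_nonneg hy0' 6,
                pow_nonneg hy0' 8, h10]
            nlinarith [mul_nonneg (pow_nonneg hy0' 12) hinner]
          have hsq : (E * Real.sqrt (1+y^2))^2 ≤ (D^2)^2 := by
            rw [mul_pow, Real.sq_sqrt (by positivity : (0:ℝ) ≤ 1+y^2)]
            nlinarith [hcert]
          have hroot := Real.sqrt_le_sqrt hsq
          rwa [Real.sqrt_sq (mul_nonneg hE0.le hsp.le),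
            Real.sqrt_sq (by positivity : (0:ℝ) ≤ D^2)] at hroot
      have : E / D^2 ≤ (Real.sqrt (1+y^2))⁻¹ := by
        rw [div_le_iff₀ (by positivity : (0:ℝ) < D^2), inv_mul_eq_div,
          le_div_iff₀ hsp]
        exact hmain
      linarith
  have h00 : f 0 ≤ f t := hmono (by constructor <;> norm_num) ⟨h0, h1⟩ h0
  have hf0 : f 0 = 0 := by simp [hf]
  rw [hf0] at h00
  simp only [hf] at h00
  linarith

set_option maxHeartbeats 1000000 in
lemma core {t : ℝ} (ht0 : 0 < t) (ht1 : t < 1) :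
    t / Real.arsinh t < (1 + t^2/6) ^ ((8:ℝ)/25) * (1 + t^2) ^ ((17:ℝ)/150) := by
  have hu1 : t^2 < 1 := by nlinarith
  have hu0 : 0 < t^2 := by positivity
  set pa : ℝ := 214552800 + 205768080*t^2 + 32689230*t^4 - 939109*t^6 with hpa_def
  set pb : ℝ := 214552800 + 241526880*t^2 + 56852250*t^4 with hpb_def
  set dd : ℝ := 35758800*t^2 + 24163020*t^4 + 939109*t^6 with hdd_def
  have ht6 : t^6 ≤ 1 := by
    calc t^6 ≤ 1^6 := by
          apply pow_le_pow_left₀ ht0.le ht1.le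
      _ = 1 := one_pow 6
  have hpa : 0 < pa := by rw [hpa_def]; nlinarith [sq_nonneg t, pow_nonneg ht0.le 4]
  have hpb : 0 < pb := by rw [hpb_def]; positivity
  have hdd : 0 ≤ dd := by rw [hdd_def]; positivity
  have hdeq : pb = pa + dd := by rw [hpa_def, hpb_def, hdd_def]; ring
  have hars : 0 < Real.arsinh t := Real.arsinh_pos_iff.2 ht0
  -- step 1 : t / arsinh t ≤ pb / pa
  have hlow : t * pa / pb ≤ Real.arsinh t := by
    have h := asinh_lb ht0.le ht1.le
    have e : 214552800*t + 205768080*t^3 + 32689230*t^5 - 939109*t^7 = t * pa := by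
      rw [hpa_def]; ring
    rwa [e] at h
  have step1 : t / Real.arsinh t ≤ pb / pa := by
    rw [div_le_div_iff₀ hars hpa]
    have := (div_le_iff₀ hpb).mp hlow
    nlinarith [this]
  -- positivity for RHS pieces
  have hX : (0:ℝ) < 1 + t^2/6 := by positivity
  have hY : (0:ℝ) < 1 + t^2 := by positivity
  have hXr : (0:ℝ) < (1 + t^2/6) ^ ((8:ℝ)/25) := Real.rpow_pos_of_pos hX _
  have hYr : (0:ℝ) < (1 + t^2) ^ ((17:ℝ)/150) := Real.rpow_pos_of_pos hY _
  -- step 2 : pb / pa < RHS, via logs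
  have hlogR : Real.log ((1 + t^2/6) ^ ((8:ℝ)/25) * (1 + t^2) ^ ((17:ℝ)/150))
      = (8:ℝ)/25 * Real.log (1 + t^2/6) + (17:ℝ)/150 * Real.log (1 + t^2) := by
    rw [Real.log_mul hXr.ne' hYr.ne', Real.log_rpow hX, Real.log_rpow hY]
  have hw : 0 ≤ dd / pa := by positivity
  have hwe : 1 + dd / pa = pb / pa := by
    rw [hdeq]; field_simp
  have hlogL : Real.log (pb / pa) ≤ (dd/pa)*(6+dd/pa)/(6+4*(dd/pa)) := by
    have := logub hw
    rwa [hwe] at this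
  have hlb1 : (t^2/6)*(6+3*(t^2/6))/(6+6*(t^2/6)+(t^2/6)^2) ≤ Real.log (1 + t^2/6) :=
    loglb (by positivity)
  have hlb2 : (t^2)*(6+3*(t^2))/(6+6*(t^2)+(t^2)^2) ≤ Real.log (1 + t^2) :=
    loglb hu0.le
  -- the key rational inequality
  have hkey : (dd/pa)*(6+dd/pa)/(6+4*(dd/pa))
      < (8:ℝ)/25 * ((t^2/6)*(6+3*(t^2/6))/(6+6*(t^2/6)+(t^2/6)^2))
        + (17:ℝ)/150 * ((t^2)*(6+3*(t^2))/(6+6*(t^2)+(t^2)^2)) := by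
    rw [← sub_pos]
    have hq1 : (0:ℝ) < 6+6*(t^2/6)+(t^2/6)^2 := by positivity
    have hq2 : (0:ℝ) < 6+6*(t^2)+(t^2)^2 := by positivity
    have hq3 : (0:ℝ) < 6+4*(dd/pa) := by positivity
    have hiden : (8:ℝ)/25 * ((t^2/6)*(6+3*(t^2/6))/(6+6*(t^2/6)+(t^2/6)^2))
        + (17:ℝ)/150 * ((t^2)*(6+3*(t^2))/(6+6*(t^2)+(t^2)^2))
        - (dd/pa)*(6+dd/pa)/(6+4*(dd/pa))
        = (246210275043532800000*t^6 + 443382939008634240000*t^8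
          + 250683212662069824000*t^10 + 39465607441918672800*t^12
          - 3799578288777411600*t^14 - 1190375130488475060*t^16
          - 43832526000171240*t^18 + 1005395313824340*t^20)
          / (150*(216+36*t^2+t^4)*(6+6*t^2+t^4)*pa*(6*pa+4*dd)) := by
      field_simp
      rw [hpa_def, hdd_def]
      ring
    rw [hiden]
    apply div_pos
    · have h14 : t^14 ≤ t^6 := pow_le_pow_of_le_one ht0.le ht1.le (by norm_num)
      have h16 : t^16 ≤ t^6 := pow_le_pow_of_le_one ht0.le ht1.le (by norm_num)
      have h18 : t^18 ≤ t^6 := pow_le_pow_of_le_one ht0.le ht1.le (by norm_num)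
      have h6 : (0:ℝ) < t^6 := by positivity
      linarith [pow_nonneg ht0.le 8, pow_nonneg ht0.le 10, pow_nonneg ht0.le 12,
        pow_nonneg ht0.le 20, h14, h16, h18, h6]
    · have h64 : (0:ℝ) < 6*pa+4*dd := by positivity
      have : (0:ℝ) < 216+36*t^2+t^4 := by positivity
      have : (0:ℝ) < 6+6*t^2+t^4 := by positivity
      positivity
  have hstep2 : pb / pa < (1 + t^2/6) ^ ((8:ℝ)/25) * (1 + t^2) ^ ((17:ℝ)/150) := by
    rw [← Real.log_lt_log_iff (by positivity) (by positivity)]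
    calc Real.log (pb/pa) ≤ (dd/pa)*(6+dd/pa)/(6+4*(dd/pa)) := hlogL
      _ < (8:ℝ)/25 * ((t^2/6)*(6+3*(t^2/6))/(6+6*(t^2/6)+(t^2/6)^2))
        + (17:ℝ)/150 * ((t^2)*(6+3*(t^2))/(6+6*(t^2)+(t^2)^2)) := hkey
      _ ≤ (8:ℝ)/25 * Real.log (1 + t^2/6) + (17:ℝ)/150 * Real.log (1 + t^2) := by
          have a1 := hlb1; have a2 := hlb2
          nlinarith [a1, a2]
      _ = Real.log ((1 + t^2/6) ^ ((8:ℝ)/25) * (1 + t^2) ^ ((17:ℝ)/150)) := hlogR.symm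
  exact lt_of_le_of_lt step1 hstep2

lemma NS_comm (a b : ℝ) : NSmean a b = NSmean b a := by
  unfold NSmean
  have h1 : (b - a) / (b + a) = -((a - b)/(a + b)) := by ring
  rw [h1, Real.arsinh_neg, show (2:ℝ) * -Real.arsinh ((a-b)/(a+b)) =
    -(2*Real.arsinh ((a-b)/(a+b))) by ring, div_neg, show b - a = -(a-b) by ring,
    neg_div, neg_neg]

lemma A_comm (a b : ℝ) : Amean a b = Amean b a := by unfold Amean; ring
lemma C_comm (a b : ℝ) : Cmean a b = Cmean b a := by
  unfold Cmean; rw [show b + a = a + b by ring, show b^2 + a^2 = a^2+b^2 by ring]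

lemma main_half (a b : ℝ) (hb : 0 < b) (hba : b < a) :
    NSmean a b < (Cmean a b / 6 + 5 * Amean a b / 6) ^ ((8 : ℝ) / 25) *
      (Cmean a b ^ ((1 : ℝ) / 6) * Amean a b ^ ((5 : ℝ) / 6)) ^ ((17 : ℝ) / 25) := by
  have ha : 0 < a := lt_trans hb hba
  have hs : (0:ℝ) < a + b := by linarith
  set t : ℝ := (a - b)/(a + b) with htdef
  have ht0 : 0 < t := div_pos (by linarith) hs
  have ht1 : t < 1 := (div_lt_one hs).2 (by linarith)
  set A : ℝ := (a + b)/2 with hAdef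
  have hA : 0 < A := by positivity
  have hat : Real.arsinh t ≠ 0 := (Real.arsinh_pos_iff.2 ht0).ne'
  have hNS : NSmean a b = A * (t / Real.arsinh t) := by
    unfold NSmean
    rw [htdef, hAdef]
    field_simp
  have hC : Cmean a b = A * (1 + t^2) := by
    unfold Cmean
    rw [htdef, hAdef]
    field_simp
    ring
  have hX : (0:ℝ) < 1 + t^2/6 := by positivity
  have hY : (0:ℝ) < 1 + t^2 := by positivity
  have hconv : Cmean a b / 6 + 5 * Amean a b / 6 = A * (1 + t^2/6) := by
    rw [hC]; unfold Amean; rw [hAdef]; ring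
  have hgeo : Cmean a b ^ ((1 : ℝ) / 6) * Amean a b ^ ((5 : ℝ) / 6)
      = A * (1 + t^2) ^ ((1:ℝ)/6) := by
    rw [hC]
    unfold Amean
    rw [← hAdef, Real.mul_rpow hA.le hY.le, mul_assoc, mul_comm ((1+t^2) ^ ((1:ℝ)/6)),
      ← mul_assoc, ← Real.rpow_add hA]
    norm_num
  rw [hNS, hconv, hgeo,
    Real.mul_rpow hA.le hX.le,
    Real.mul_rpow hA.le (Real.rpow_nonneg hY.le _),
    ← Real.rpow_mul hY.le]
  have harr : A ^ ((8:ℝ)/25) * (1 + t^2/6) ^ ((8:ℝ)/25) *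
      (A ^ ((17:ℝ)/25) * (1 + t^2) ^ ((1:ℝ)/6 * ((17:ℝ)/25)))
      = (A ^ ((8:ℝ)/25) * A ^ ((17:ℝ)/25)) *
        ((1 + t^2/6) ^ ((8:ℝ)/25) * (1 + t^2) ^ ((17:ℝ)/150)) := by
    norm_num
    ring
  rw [harr, ← Real.rpow_add hA, show (8:ℝ)/25 + (17:ℝ)/25 = 1 by norm_num,
    Real.rpow_one]
  exact (mul_lt_mul_iff_right₀ hA).2 (core ht0 ht1)
  
theorem stmt_5 (a b : ℝ) (ha : 0 < a) (hb : 0 < b) (hab : a ≠ b) :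
    NSmean a b < (Cmean a b / 6 + 5 * Amean a b / 6) ^ ((8 : ℝ) / 25) *
      (Cmean a b ^ ((1 : ℝ) / 6) * Amean a b ^ ((5 : ℝ) / 6)) ^ ((17 : ℝ) / 25) := by
  rcases hab.lt_or_gt with h | h
  · rw [NS_comm, A_comm, C_comm]
    exact main_half b a ha h
  · exact main_half a b hb h
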